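/- Let (A, Con, |~) be an abstract nonmonotonic system and B = (B, Con*, Δ) the canonical default structure constructed from it. For finite consistent sets P, Q ∈ Con, if Q ⊆ P ⊆ Q̃, then the set Q̃ ∪ {[Q]} is an extension of P in B. -/

import Mathlib

/-- A set is consistent if every finite subset of it lies in Con. -/
def IsCons {α : Type*} (Con : Set α → Prop) (S : Set α) : Prop :=
  ∀ X : Set α, X ⊆ S → X.Finite → Con X

/-- With trivial entailment: φ(x, S, 0) = x and
φ(x, S, i+1) = φ(x, S, i) ∪ {a | (X, a) ∈ Δ, X ⊆ φ(x, S, i), {a} ∪ S consistent}. -/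
def phiT {α : Type*} (Con : Set α → Prop) (Δ : Set (Set α × α)) (x S : Set α) :
    ℕ → Set α
  | 0 => x
  | i + 1 =>
      phiT Con Δ x S i ∪
        {a | ∃ X : Set α, (X, a) ∈ Δ ∧ X ⊆ phiT Con Δ x S i ∧ IsCons Con ({a} ∪ S)}

/-- Φ(x, S) = ⋃_{i≥0} φ(x, S, i). -/
def PhiT {α : Type*} (Con : Set α → Prop) (Δ : Set (Set α × α)) (x S : Set α) : Set α :=
  ⋃ i, phiT Con Δ x S i

/-- A consistent set y is an extension of x (x ε y) if Φ(x, y) = y. -/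
def ExtT {α : Type*} (Con : Set α → Prop) (Δ : Set (Set α × α)) (x y : Set α) : Prop :=
  IsCons Con y ∧ PhiT Con Δ x y = y

/-- X̃ := {t ∈ A | X |~ {t}}. -/
def Tilde {α : Type*} (snake : Set α → Set α → Prop) (X : Set α) : Set α :=
  {t | snake X {t}}

/-- The token set of the canonical default structure: tokens of A (`Sum.inl a`) together
with a fresh token [X] (`Sum.inr X`) for each X ∈ Con. -/
abbrev Tok (α : Type*) := α ⊕ Set α

/-- Δ := {(X, [X]) | X ∈ Con} ∪ {({[X]}, a) | X ∈ Con, X |~ {a}, a ∉ X}. -/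
def DeltaCan {α : Type*} (Con : Set α → Prop) (snake : Set α → Set α → Prop) :
    Set (Set (Tok α) × Tok α) :=
  {p | ∃ X : Set α, Con X ∧ p = (Sum.inl '' X, Sum.inr X)} ∪
  {p | ∃ (X : Set α) (a : α), Con X ∧ snake X {a} ∧ a ∉ X ∧
        p = ({Sum.inr X}, Sum.inl a)}

/-- A finite W ⊆ B lies in Con* iff (1) W ∩ A ∈ Con, (2) W contains at most one token of
the form [X], and (3) if [X] ∈ W then W \ {[X]} ⊆ A and X |~ (W \ {[X]}). -/
def ConStar {α : Type*} (Con : Set α → Prop) (snake : Set α → Set α → Prop)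
    (W : Set (Tok α)) : Prop :=
  W.Finite ∧
  Con (Sum.inl ⁻¹' W) ∧
  (∀ X Y : Set α, Sum.inr X ∈ W → Sum.inr Y ∈ W → X = Y) ∧
  (∀ X : Set α, Sum.inr X ∈ W →
    (∀ t ∈ W, t ≠ Sum.inr X → ∃ a : α, t = Sum.inl a) ∧
    snake X (Sum.inl ⁻¹' W))

/-- if Q ⊆ P ⊆ Q̃ for finite consistent sets P, Q ∈ Con, then
Q̃ ∪ {[Q]} is an extension of P in the canonical default structure B. -/
theorem canonical_extension_of {α : Type*} (Con : Set α → Prop)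
    (snake : Set α → Set α → Prop)
    -- Con is a collection of finite subsets of A
    (hCfin : ∀ X : Set α, Con X → X.Finite)
    -- |~ is a relation between members of Con
    (hSnakeCon : ∀ X Y : Set α, snake X Y → Con X ∧ Con Y)
    (h1 : ∀ X Y : Set α, X ⊆ Y → Con Y → Con X)
    (h2 : ∀ a : α, Con {a})
    (h3 : ∀ X T : Set α, snake X T → Con (X ∪ T))
    (h4 : ∀ X Y : Set α, Y ⊆ X → Con X → snake X Y)
    (h5 : ∀ X T Y : Set α, snake X T → snake (X ∪ T) Y → snake X Y)
    (h6 : ∀ X Y Z : Set α, snake X Y → snake X Z → snake X (Y ∪ Z)) :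
    ∀ P Q : Set α, Con P → Con Q → Q ⊆ P → P ⊆ Tilde snake Q →
      ExtT (ConStar Con snake) (DeltaCan Con snake)
        (Sum.inl '' P)
        (Sum.inl '' Tilde snake Q ∪ {Sum.inr Q}) := by
  intro P Q hP hQ hQP hPQ
  set y : Set (Tok α) := Sum.inl '' Tilde snake Q ∪ {Sum.inr Q} with hy
  -- membership facts about y
  have hinl_y : ∀ a : α, (Sum.inl a : Tok α) ∈ y ↔ a ∈ Tilde snake Q := by
    intro a
    constructor
    · rintro (⟨s, hs, heq⟩ | h)
      · cases heq; exact hs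
      · simp at h
    · intro ha; exact Or.inl ⟨a, ha, rfl⟩
  have hinr_y : ∀ X : Set α, (Sum.inr X : Tok α) ∈ y → X = Q := by
    rintro X (⟨s, hs, heq⟩ | h)
    · simp at heq
    · simpa using h
  -- key: snake Q of finite subsets of Tilde snake Q
  have key : ∀ T : Set α, T.Finite → T ⊆ Tilde snake Q → snake Q T := by
    intro T hTfin
    refine Set.Finite.induction_on T hTfin (fun _ => h4 Q ∅ (Set.empty_subset _) hQ) ?_
    intro a s _ _ ih hsub
    rw [Set.insert_eq]
    exact h6 _ _ _ (hsub (Set.mem_insert _ _))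
      (ih (fun t ht => hsub (Set.mem_insert_of_mem _ ht)))
  -- consistency of y
  have hyCons : IsCons (ConStar Con snake) y := by
    intro W hW hWfin
    have hpre : Sum.inl ⁻¹' W ⊆ Tilde snake Q := by
      intro t ht
      exact (hinl_y t).1 (hW ht)
    have hprefin : (Sum.inl ⁻¹' W).Finite :=
      hWfin.preimage Sum.inl_injective.injOn
    have hsn : snake Q (Sum.inl ⁻¹' W) := key _ hprefin hpre
    have hinrW : ∀ X : Set α, Sum.inr X ∈ W → X = Q := fun X hX => hinr_y X (hW hX)
    refine ⟨hWfin, (hSnakeCon _ _ hsn).2, ?_, ?_⟩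
    · intro X Y hX hY; rw [hinrW X hX, hinrW Y hY]
    · intro X hX
      constructor
      · intro t ht htne
        rcases hW ht with ⟨s, _, heq⟩ | h
        · exact ⟨s, heq.symm⟩
        · exfalso; apply htne; rw [hinrW X hX]; simpa using h
      · rw [hinrW X hX]; exact hsn
  -- helper: consistency of {a} ∪ y for a ∈ y
  have hconsMem : ∀ a : Tok α, a ∈ y → IsCons (ConStar Con snake) ({a} ∪ y) := by
    intro a ha
    have : ({a} : Set (Tok α)) ∪ y = y :=
      Set.union_eq_self_of_subset_left (Set.singleton_subset_iff.2 ha)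
    rw [this]; exact hyCons
  -- upper bound: every phi level is contained in y
  have hupper : ∀ i, phiT (ConStar Con snake) (DeltaCan Con snake) (Sum.inl '' P) y i ⊆ y := by
    intro i
    induction i with
    | zero =>
      intro t ht
      rcases ht with ⟨a, haP, rfl⟩
      exact (hinl_y a).2 (hPQ haP)
    | succ i ih =>
      rintro t (ht | ⟨X, hXd, hXsub, hcons⟩)
      · exact ih ht
      · rcases hXd with ⟨X', hX'C, heq⟩ | ⟨X', b, _, hsnb, _, heq⟩
        · cases heq
          -- t = Sum.inr X'; use consistency of {Sum.inr X'} ∪ y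
          have hsub2 : ({Sum.inr X', Sum.inr Q} : Set (Tok α)) ⊆ {Sum.inr X'} ∪ y := by
            intro u hu
            rcases hu with rfl | hu
            · exact Or.inl rfl
            · simp at hu; subst hu; exact Or.inr (Or.inr rfl)
          have hfin2 : ({Sum.inr X', Sum.inr Q} : Set (Tok α)).Finite :=
            (Set.finite_singleton _).insert _
          obtain ⟨_, _, huniq, _⟩ := hcons _ hsub2 hfin2
          have : X' = Q := huniq X' Q (Or.inl rfl) (Or.inr rfl)
          subst this
          exact Or.inr rfl
        · cases heq
          have hmem : (Sum.inr X' : Tok α) ∈ y := ih (hXsub rfl)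
          have : X' = Q := hinr_y X' hmem
          subst this
          exact (hinl_y b).2 hsnb
  -- level 1 contains Sum.inr Q
  have hlvl1 : (Sum.inr Q : Tok α) ∈
      phiT (ConStar Con snake) (DeltaCan Con snake) (Sum.inl '' P) y 1 := by
    refine Or.inr ⟨Sum.inl '' Q, Or.inl ⟨Q, hQ, rfl⟩, ?_, ?_⟩
    · exact Set.image_mono hQP
    · exact hconsMem _ (Or.inr rfl)
  -- level 2 contains everything in y
  have hlvl2 : y ⊆ phiT (ConStar Con snake) (DeltaCan Con snake) (Sum.inl '' P) y 2 := by
    rintro t (⟨a, ha, rfl⟩ | ht)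
    · by_cases haQ : a ∈ Q
      · exact Or.inl (Or.inl ⟨a, hQP haQ, rfl⟩)
      · refine Or.inr ⟨{Sum.inr Q}, Or.inr ⟨Q, a, hQ, ha, haQ, rfl⟩, ?_, ?_⟩
        · intro u hu; simp at hu; subst hu; exact hlvl1
        · exact hconsMem _ ((hinl_y a).2 ha)
    · simp at ht; subst ht
      exact Or.inl hlvl1
  constructor
  · exact hyCons
  · apply Set.Subset.antisymm
    · exact Set.iUnion_subset hupper
    · intro t ht
      exact Set.mem_iUnion.2 ⟨2, hlvl2 ht⟩
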